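/- arXiv:2309.15209 — 4 statements merged into one kernel-verified Lean document; each statement's English description precedes it below -/
import Mathlib

section
/- For the step polynomial S(x,y) = x + y + 1/x + 1/y + a·x·y with a > 0, there is a unique point (x₀,y₀) ∈ (0,∞)² with ∂S/∂x(x₀,y₀) = ∂S/∂y(x₀,y₀) = 0; moreover x₀ = y₀ = k, where k ∈ (0,1) is the unique solution of a·k³ = 1 − k². -/
/-- The step polynomial `S(x,y) = x + y + 1/x + 1/y + a·x·y`. -/
noncomputable def stepPoly (a x y : ℝ) : ℝ := x + y + 1 / x + 1 / y + a * x * y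

lemma stepPoly_hasDerivAt_x (a y x : ℝ) (hx : x ≠ 0) :
    HasDerivAt (fun t => stepPoly a t y) (1 - 1 / x ^ 2 + a * y) x := by
  have h2 : HasDerivAt (fun t : ℝ => 1 / t) (-(1 / x ^ 2)) x := by
    simpa [one_div] using hasDerivAt_inv hx
  have h5 : HasDerivAt (fun t : ℝ => a * t * y) (a * y) x := by
    simpa using ((hasDerivAt_id x).const_mul a).mul_const y
  have h3 : HasDerivAt (fun t : ℝ => t + y + 1 / t + 1 / y + a * t * y)
      (1 + 0 + (-(1 / x ^ 2)) + 0 + a * y) x :=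
    ((((hasDerivAt_id x).add (hasDerivAt_const x y)).add h2).add
      (hasDerivAt_const x (1 / y))).add h5
  have h4 : (1 : ℝ) + 0 + (-(1 / x ^ 2)) + 0 + a * y = 1 - 1 / x ^ 2 + a * y := by ring
  rw [h4] at h3
  exact h3

lemma stepPoly_hasDerivAt_y (a x y : ℝ) (hy : y ≠ 0) :
    HasDerivAt (fun t => stepPoly a x t) (1 - 1 / y ^ 2 + a * x) y := by
  have h2 : HasDerivAt (fun t : ℝ => 1 / t) (-(1 / y ^ 2)) y := by
    simpa [one_div] using hasDerivAt_inv hy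
  have h5 : HasDerivAt (fun t : ℝ => a * x * t) (a * x) y := by
    simpa using (hasDerivAt_id y).const_mul (a * x)
  have h3 : HasDerivAt (fun t : ℝ => x + t + 1 / x + 1 / t + a * x * t)
      (0 + 1 + 0 + (-(1 / y ^ 2)) + a * x) y :=
    ((((hasDerivAt_const y x).add (hasDerivAt_id y)).add
      (hasDerivAt_const y (1 / x))).add h2).add h5
  have h4 : (0 : ℝ) + 1 + 0 + (-(1 / y ^ 2)) + a * x = 1 - 1 / y ^ 2 + a * x := by ring
  rw [h4] at h3
  exact h3

/-- For `a > 0`, the step polynomial has a unique critical point in `(0,∞)²`, namely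
`(k,k)` where `k ∈ (0,1)` is the unique solution of `a k³ = 1 − k²`. -/
theorem stepPoly_unique_critical_point (a k : ℝ) (ha : 0 < a)
    (hk : k ∈ Set.Ioo (0 : ℝ) 1) (hak : a * k ^ 3 = 1 - k ^ 2) :
    (∃! p : ℝ × ℝ, (0 < p.1 ∧ 0 < p.2) ∧
      deriv (fun x => stepPoly a x p.2) p.1 = 0 ∧
      deriv (fun y => stepPoly a p.1 y) p.2 = 0) ∧
    ((0 < k ∧ 0 < k) ∧
      deriv (fun x => stepPoly a x k) k = 0 ∧
      deriv (fun y => stepPoly a k y) k = 0) := by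
  obtain ⟨hk0, hk1⟩ := hk
  have hk0' : k ≠ 0 := ne_of_gt hk0
  have hdx : deriv (fun x => stepPoly a x k) k = 0 := by
    rw [(stepPoly_hasDerivAt_x a k k hk0').deriv]
    field_simp
    linear_combination hak
  have hdy : deriv (fun y => stepPoly a k y) k = 0 := by
    rw [(stepPoly_hasDerivAt_y a k k hk0').deriv]
    field_simp
    linear_combination hak
  refine ⟨⟨(k, k), ⟨⟨hk0, hk0⟩, hdx, hdy⟩, ?_⟩, ⟨hk0, hk0⟩, hdx, hdy⟩
  rintro ⟨x, y⟩ ⟨⟨hx, hy⟩, hd1, hd2⟩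
  simp only at hx hy hd1 hd2 ⊢
  rw [(stepPoly_hasDerivAt_x a y x (ne_of_gt hx)).deriv] at hd1
  rw [(stepPoly_hasDerivAt_y a x y (ne_of_gt hy)).deriv] at hd2
  have e1 : a * y * x ^ 2 + x ^ 2 - 1 = 0 := by
    have h := hd1
    field_simp at h
    linarith
  have e2 : a * x * y ^ 2 + y ^ 2 - 1 = 0 := by
    have h := hd2
    field_simp at h
    linarith
  have key : (x - y) * (a * x * y + x + y) = 0 := by linear_combination e1 - e2
  have hpos : (0 : ℝ) < a * x * y + x + y := by positivity
  have hxy : x = y := by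
    rcases mul_eq_zero.mp key with h | h
    · linarith
    · linarith
  subst hxy
  have key2 : (x - k) * (a * (x ^ 2 + x * k + k ^ 2) + x + k) = 0 := by
    linear_combination e1 - hak
  have hpos2 : (0 : ℝ) < a * (x ^ 2 + x * k + k ^ 2) + x + k := by positivity
  have hxk : x = k := by
    rcases mul_eq_zero.mp key2 with h | h
    · linarith
    · linarith
  exact Prod.ext hxk hxk
end

section
/- For all integers p > ℓ ≥ 0 and m ≥ 0, there exist real constants c_{i,j} (for 1 ≤ i ≤ p − ℓ and max(m − i, 0) ≤ j ≤ m) such that, as n → ∞, (log(n+1))^m/(n+1)^ℓ = (log n)^m/n^ℓ + ∑_{i=1}^{p−ℓ} ∑_{j=max(m−i,0)}^{m} c_{i,j} (log n)^j / n^{ℓ+i} + O((log n)^m / n^{p+1}). -/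
open Filter Topology Finset Polynomial Asymptotics

noncomputable section
namespace LogShift

def L (n : ℕ) : ℝ := Real.log n
def u (n : ℕ) : ℝ := ((n : ℝ))⁻¹
def S (n : ℕ) : ℝ := Real.log ((n : ℝ) + 1)
def D (n : ℕ) : ℝ := Real.log ((n : ℝ) + 1) - Real.log n

def ev (q : Polynomial (Polynomial ℝ)) (n : ℕ) : ℝ :=
  (q.map (evalRingHom (L n))).eval (u n)

def err (J K : ℕ) (n : ℕ) : ℝ := L n ^ J * u n ^ (K + 1)

structure AE (f : ℕ → ℝ) (q : Polynomial (Polynomial ℝ)) (J K v w : ℕ) : Prop where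
  bigO : (fun n => f n - ev q n) =O[atTop] err J K
  degJ : ∀ i, (q.coeff i).natDegree ≤ J
  val : ∀ i, i < v → q.coeff i = 0
  wt : ∀ i j, i + j < w → (q.coeff i).coeff j = 0

lemma u_nonneg (n : ℕ) : 0 ≤ u n :=
  inv_nonneg.mpr (Nat.cast_nonneg n)

lemma eLge : ∀ᶠ n : ℕ in atTop, 1 ≤ L n := by
  filter_upwards [eventually_ge_atTop 3] with n hn
  have h3 : (3 : ℝ) ≤ (n : ℝ) := by exact_mod_cast hn
  have he : Real.exp 1 ≤ (n : ℝ) := by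
    have := Real.exp_one_lt_d9
    linarith
  rw [L, Real.le_log_iff_exp_le (by linarith)]
  exact he

lemma eu_le_one : ∀ᶠ n : ℕ in atTop, u n ≤ 1 := by
  filter_upwards [eventually_ge_atTop 1] with n hn
  have h1 : (1 : ℝ) ≤ (n : ℝ) := by exact_mod_cast hn
  rw [u]
  exact inv_le_one_of_one_le₀ h1

lemma base_bigO {j J i i' : ℕ} (hj : j ≤ J) (hi : i' ≤ i) :
    (fun n => L n ^ j * u n ^ i) =O[atTop] fun n => L n ^ J * u n ^ i' := by
  rw [isBigO_iff]
  refine ⟨1, ?_⟩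
  filter_upwards [eLge, eu_le_one] with n h1 hu1
  have hu0 : 0 ≤ u n := u_nonneg n
  have hL0 : (0 : ℝ) ≤ L n := le_trans zero_le_one h1
  rw [one_mul, Real.norm_eq_abs, Real.norm_eq_abs,
    abs_of_nonneg (by positivity), abs_of_nonneg (by positivity)]
  exact mul_le_mul (pow_le_pow_right₀ h1 hj) (pow_le_pow_of_le_one hu0 hu1 hi)
    (by positivity) (by positivity)

lemma bigO_L {j J : ℕ} (h : j ≤ J) :
    (fun n => L n ^ j) =O[atTop] fun n => L n ^ J := by
  simpa using base_bigO h (le_refl 0)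

lemma bigO_u {i i' : ℕ} (h : i' ≤ i) :
    (fun n => u n ^ i) =O[atTop] fun n => u n ^ i' := by
  simpa using base_bigO (le_refl 0) h

lemma polyeval_bigO (r : Polynomial ℝ) {J : ℕ} (h : r.natDegree ≤ J) :
    (fun n => r.eval (L n)) =O[atTop] fun n => L n ^ J := by
  have hrepr : ∀ n, r.eval (L n) = ∑ j ∈ range (J + 1), r.coeff j * L n ^ j :=
    fun n => eval_eq_sum_range' (lt_of_le_of_lt h (lt_add_one J)) _
  have h2 : (fun n => ∑ j ∈ range (J + 1), r.coeff j * L n ^ j) =O[atTop]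
      fun n => L n ^ J := by
    apply IsBigO.fun_sum
    intro j hj
    exact (bigO_L (mem_range_succ_iff.mp hj)).const_mul_left _
  exact h2.congr (fun n => (hrepr n).symm) (fun n => rfl)

lemma ev_sum_repr (q : Polynomial (Polynomial ℝ)) {M : ℕ} (hM : q.natDegree ≤ M) (n : ℕ) :
    ev q n = ∑ i ∈ range (M + 1), (q.coeff i).eval (L n) * u n ^ i := by
  rw [ev, eval_eq_sum_range'
    (lt_of_le_of_lt (le_trans (natDegree_map_le) hM) (lt_add_one M))]
  exact Finset.sum_congr rfl fun i _ => by rw [coeff_map]; rfl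

lemma ev_bigO (q : Polynomial (Polynomial ℝ)) {J : ℕ}
    (hdeg : ∀ i, (q.coeff i).natDegree ≤ J) :
    (fun n => ev q n) =O[atTop] fun n => L n ^ J := by
  have hmem : ∀ i ∈ range (q.natDegree + 1),
      (fun n => (q.coeff i).eval (L n) * u n ^ i) =O[atTop] fun n => L n ^ J := by
    intro i _
    simpa using (polyeval_bigO _ (hdeg i)).mul (bigO_u (Nat.zero_le i))
  exact (IsBigO.fun_sum hmem).congr
    (fun n => (ev_sum_repr q (le_refl q.natDegree) n).symm) (fun n => rfl)

lemma err_bigO_L {J K : ℕ} : (err J K) =O[atTop] fun n => L n ^ J := by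
  show (fun n => L n ^ J * u n ^ (K + 1)) =O[atTop] _
  simpa using base_bigO (le_refl J) (Nat.zero_le (K + 1))

lemma AE.bigO_self {f q J K v w} (h : AE f q J K v w) :
    f =O[atTop] fun n => L n ^ J := by
  have h1 : (fun n => (f n - ev q n) + ev q n) =O[atTop] fun n => L n ^ J :=
    (h.bigO.trans err_bigO_L).add (ev_bigO q h.degJ)
  exact h1.congr (fun n => by ring) (fun n => rfl)


lemma ev_add (q1 q2 : Polynomial (Polynomial ℝ)) (n : ℕ) :
    ev (q1 + q2) n = ev q1 n + ev q2 n := by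
  simp [ev, Polynomial.map_add]

lemma ev_mul (q1 q2 : Polynomial (Polynomial ℝ)) (n : ℕ) :
    ev (q1 * q2) n = ev q1 n * ev q2 n := by
  simp [ev, Polynomial.map_mul]

lemma ev_one (n : ℕ) : ev 1 n = 1 := by simp [ev]

lemma ev_zero (n : ℕ) : ev 0 n = 0 := by simp [ev]

lemma AE.congr {f g : ℕ → ℝ} {q J K v w} (hfg : ∀ n, f n = g n)
    (h : AE f q J K v w) : AE g q J K v w := by
  have : f = g := funext hfg
  exact this ▸ h

lemma AE.of_eq {f q J K v w J' v' w'} (h : AE f q J K v w)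
    (hJ : J = J') (hv : v = v') (hw : w = w') : AE f q J' K v' w' := by
  subst hJ; subst hv; subst hw; exact h

lemma AE.weaken {f q J K v w} {J' v' w' : ℕ} (h : AE f q J K v w)
    (hJ : J ≤ J') (hv : v' ≤ v) (hw : w' ≤ w) : AE f q J' K v' w' where
  bigO := h.bigO.trans (by show (fun n => L n ^ J * u n ^ (K + 1)) =O[atTop] (fun n => L n ^ J' * u n ^ (K + 1)); exact base_bigO hJ (le_refl (K + 1)))
  degJ := fun i => le_trans (h.degJ i) hJ
  val := fun i hi => h.val i (lt_of_lt_of_le hi hv)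
  wt := fun i j hij => h.wt i j (lt_of_lt_of_le hij hw)

lemma AE_zero (J K v w : ℕ) : AE (fun _ => 0) 0 J K v w where
  bigO := by
    have : (fun n : ℕ => (0:ℝ)) =O[atTop] err J K := isBigO_zero _ _
    exact this.congr (fun n => by rw [ev_zero]; ring) (fun n => rfl)
  degJ := fun i => by simp
  val := fun i _ => by simp
  wt := fun i j _ => by simp

lemma AE_one (K : ℕ) : AE (fun _ => 1) 1 0 K 0 0 where
  bigO := by
    have : (fun n : ℕ => (0:ℝ)) =O[atTop] err 0 K := isBigO_zero _ _
    exact this.congr (fun n => by rw [ev_one]; ring) (fun n => rfl)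
  degJ := fun i => by
    rcases eq_or_ne i 0 with h | h <;> simp [Polynomial.coeff_one, h]
  val := fun i hi => absurd hi (Nat.not_lt_zero i)
  wt := fun i j hij => absurd hij (Nat.not_lt_zero _)

lemma AE.add {f g : ℕ → ℝ} {q1 q2 J K v w} (h1 : AE f q1 J K v w)
    (h2 : AE g q2 J K v w) : AE (fun n => f n + g n) (q1 + q2) J K v w where
  bigO := (h1.bigO.add h2.bigO).congr
    (fun n => by rw [ev_add]; ring) (fun n => rfl)
  degJ := fun i => by
    rw [coeff_add]
    exact le_trans (natDegree_add_le _ _) (max_le (h1.degJ i) (h2.degJ i))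
  val := fun i hi => by rw [coeff_add, h1.val i hi, h2.val i hi, add_zero]
  wt := fun i j hij => by
    rw [coeff_add, Polynomial.coeff_add, h1.wt i j hij, h2.wt i j hij, add_zero]

lemma AE.mul {f g : ℕ → ℝ} {q1 q2 J1 J2 K v1 v2 w1 w2}
    (h1 : AE f q1 J1 K v1 w1) (h2 : AE g q2 J2 K v2 w2) :
    AE (fun n => f n * g n) (q1 * q2) (J1 + J2) K (v1 + v2) (w1 + w2) where
  bigO := by
    have key : ∀ n, f n * g n - ev (q1 * q2) n
        = (f n - ev q1 n) * g n + ev q1 n * (g n - ev q2 n) := by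
      intro n; rw [ev_mul]; ring
    have hA : (fun n => (f n - ev q1 n) * g n) =O[atTop] err (J1 + J2) K := by
      have := h1.bigO.mul h2.bigO_self
      exact this.trans (by
        have : ∀ n, err J1 K n * L n ^ J2 = err (J1 + J2) K n := by
          intro n; simp only [err, pow_add]; ring
        exact (funext this : _) ▸ isBigO_refl _ _)
    have hB : (fun n => ev q1 n * (g n - ev q2 n)) =O[atTop] err (J1 + J2) K := by
      have := (ev_bigO q1 h1.degJ).mul h2.bigO
      exact this.trans (by
        have : ∀ n, L n ^ J1 * err J2 K n = err (J1 + J2) K n := by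
          intro n; simp only [err, pow_add]; ring
        exact (funext this : _) ▸ isBigO_refl _ _)
    exact (hA.add hB).congr (fun n => (key n).symm) (fun n => rfl)
  degJ := fun i => by
    rw [coeff_mul]
    apply natDegree_sum_le_of_forall_le
    intro x _
    exact le_trans natDegree_mul_le (add_le_add (h1.degJ _) (h2.degJ _))
  val := fun i hi => by
    rw [coeff_mul]
    apply Finset.sum_eq_zero
    intro x hx
    have hxi := Finset.HasAntidiagonal.mem_antidiagonal.mp hx
    rcases (by omega : x.1 < v1 ∨ x.2 < v2) with h | h
    · rw [h1.val _ h, zero_mul]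
    · rw [h2.val _ h, mul_zero]
  wt := fun i j hij => by
    rw [coeff_mul, finset_sum_coeff]
    apply Finset.sum_eq_zero
    intro x hx
    have hxi := Finset.HasAntidiagonal.mem_antidiagonal.mp hx
    rw [Polynomial.coeff_mul]
    apply Finset.sum_eq_zero
    intro y hy
    have hyj := Finset.HasAntidiagonal.mem_antidiagonal.mp hy
    rcases (by omega : x.1 + y.1 < w1 ∨ x.2 + y.2 < w2) with h | h
    · rw [h1.wt _ _ h, zero_mul]
    · rw [h2.wt _ _ h, mul_zero]

lemma AE.pow {f : ℕ → ℝ} {q J K v w} (h : AE f q J K v w) (k : ℕ) :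
    AE (fun n => f n ^ k) (q ^ k) (k * J) K (k * v) (k * w) := by
  induction k with
  | zero =>
    simpa using (AE_one K).congr (fun n => (pow_zero (f n)).symm)
  | succ k ih =>
    have := (ih.mul h).congr (fun n => (pow_succ (f n) k).symm)
    rw [← pow_succ] at this
    exact this.of_eq (by ring) (by ring) (by ring)

lemma AE.finsum {ι : Type*} {s : Finset ι} {F : ι → ℕ → ℝ}
    {Q : ι → Polynomial (Polynomial ℝ)} {J K v w : ℕ}
    (h : ∀ i ∈ s, AE (F i) (Q i) J K v w) :
    AE (fun n => ∑ i ∈ s, F i n) (∑ i ∈ s, Q i) J K v w := by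
  induction s using Finset.cons_induction with
  | empty => simpa using AE_zero J K v w
  | cons a s ha ih =>
    have h1 := h a (Finset.mem_cons_self a s)
    have h2 := ih (fun i hi => h i (Finset.mem_cons_of_mem hi))
    rw [Finset.sum_cons]
    exact (h1.add h2).congr (fun n => (Finset.sum_cons _).symm)


def mono (a : ℕ → ℝ) (s : Finset ℕ) : Polynomial (Polynomial ℝ) :=
  ∑ i ∈ s, Polynomial.C (Polynomial.C (a i)) * Polynomial.X ^ i

lemma ev_mono (a : ℕ → ℝ) (s : Finset ℕ) (n : ℕ) :
    ev (mono a s) n = ∑ i ∈ s, a i * u n ^ i := by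
  rw [mono]
  induction s using Finset.cons_induction with
  | empty => simp [ev_zero]
  | cons b s hb ih =>
    rw [Finset.sum_cons, Finset.sum_cons, ev_add, ih]
    congr 1
    simp [ev, Polynomial.map_mul, Polynomial.map_pow, Polynomial.map_C]

lemma coeff_mono (a : ℕ → ℝ) (s : Finset ℕ) (t : ℕ) :
    (mono a s).coeff t = if t ∈ s then Polynomial.C (a t) else 0 := by
  rw [mono, finset_sum_coeff]
  rw [Finset.sum_congr rfl (fun i _ => coeff_C_mul_X_pow (Polynomial.C (a i)) i t)]
  exact Finset.sum_ite_eq s t (fun i => Polynomial.C (a i))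

lemma AE_L (K : ℕ) : AE L (Polynomial.C Polynomial.X) 1 K 0 1 where
  bigO := by
    have hev : ∀ n, ev (Polynomial.C Polynomial.X) n = L n := by
      intro n; simp [ev, Polynomial.map_C]
    have : (fun n : ℕ => (0:ℝ)) =O[atTop] err 1 K := isBigO_zero _ _
    exact this.congr (fun n => by rw [hev]; ring) (fun n => rfl)
  degJ := fun i => by
    rcases eq_or_ne i 0 with h | h <;> simp [Polynomial.coeff_C, h]
  val := fun i hi => absurd hi (Nat.not_lt_zero i)
  wt := fun i j hij => by
    have hi : i = 0 := by omega
    have hj : j = 0 := by omega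
    subst hi; subst hj
    simp [Polynomial.coeff_C, Polynomial.coeff_X_zero]

lemma AE_D (K : ℕ) :
    AE D (mono (fun i => (-1 : ℝ) ^ (i + 1) / i) (Finset.Icc 1 K)) 0 K 1 1 where
  bigO := by
    rw [isBigO_iff]
    refine ⟨2, ?_⟩
    filter_upwards [eventually_ge_atTop 2] with n hn
    have hn2 : (2 : ℝ) ≤ (n : ℝ) := by exact_mod_cast hn
    have hn0 : (0 : ℝ) < (n : ℝ) := by linarith
    set x := u n with hx
    have hx0 : 0 ≤ x := u_nonneg n
    have hxh : x ≤ 1 / 2 := by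
      rw [hx, u]
      have h := inv_anti₀ (by norm_num : (0:ℝ) < 2) hn2
      norm_num at h ⊢
      linarith
    have habs : |(-x)| < 1 := by rw [abs_neg, abs_of_nonneg hx0]; linarith
    have key := Real.abs_log_sub_add_sum_range_le habs K
    -- identify log (1 - -x) with D n
    have hlog : Real.log (1 - (-x)) = D n := by
      have h1 : (1 : ℝ) - (-x) = ((n : ℝ) + 1) / n := by
        rw [hx, u]; field_simp; ring
      rw [h1, Real.log_div (by linarith) (ne_of_gt hn0), D]
    -- identify the sum with - ev
    have hsum : ∑ i ∈ range K, (-x) ^ (i + 1) / (i + 1)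
        = -(ev (mono (fun i => (-1 : ℝ) ^ (i + 1) / i) (Finset.Icc 1 K)) n) := by
      rw [ev_mono, ← Finset.Ico_add_one_right_eq_Icc, Finset.sum_Ico_eq_sum_range]
      rw [← Finset.sum_neg_distrib]
      apply Finset.sum_congr (by norm_num)
      intro t _
      have : ((-x) : ℝ) ^ (t + 1) = (-1 : ℝ) ^ (t + 1) * x ^ (t + 1) := by
        rw [neg_pow]
      rw [this]
      push_cast
      rw [pow_succ, pow_succ]
      ring
    have hDev : D n - ev (mono (fun i => (-1 : ℝ) ^ (i + 1) / i) (Finset.Icc 1 K)) n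
        = (∑ i ∈ range K, (-x) ^ (i + 1) / (i + 1)) + Real.log (1 - (-x)) := by
      rw [hlog, hsum]; ring
    rw [hDev]
    refine le_trans key ?_
    have habs2 : |(-x)| = x := by rw [abs_neg, abs_of_nonneg hx0]
    rw [habs2]
    have h1x : (1 : ℝ) / 2 ≤ 1 - x := by linarith
    have herr : ‖err 0 K n‖ = x ^ (K + 1) := by
      rw [err, Real.norm_eq_abs, pow_zero, one_mul, abs_of_nonneg (by positivity)]
    rw [herr]
    rw [div_le_iff₀ (by linarith)]
    have hxp : 0 ≤ x ^ (K + 1) := by positivity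
    nlinarith
  degJ := fun i => by
    rw [coeff_mono]; split <;> simp
  val := fun i hi => by
    rw [coeff_mono]
    have : i ∉ Finset.Icc 1 K := by simp; omega
    simp [this]
  wt := fun i j hij => by
    have hi : i = 0 := by omega
    subst hi
    rw [coeff_mono]
    have : (0 : ℕ) ∉ Finset.Icc 1 K := by simp
    simp [this]

lemma W_eq (n : ℕ) (hn : 1 ≤ n) : (n : ℝ) / ((n : ℝ) + 1) = (1 + u n)⁻¹ := by
  have hn0 : (0 : ℝ) < (n : ℝ) := by exact_mod_cast hn
  rw [u]
  field_simp

def W (n : ℕ) : ℝ := (n : ℝ) / ((n : ℝ) + 1)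

lemma AE_W_bigO (K : ℕ) :
    (fun n => W n - ev (mono (fun i => (-1 : ℝ) ^ i) (Finset.range (K + 1))) n)
      =O[atTop] err 0 K := by
  rw [isBigO_iff]
  refine ⟨1, ?_⟩
  filter_upwards [eventually_ge_atTop 1] with n hn
  have hn0 : (0 : ℝ) < (n : ℝ) := by exact_mod_cast hn
  set x := u n with hx
  have hx0 : 0 ≤ x := u_nonneg n
  have h1x : (0 : ℝ) < 1 + x := by linarith
  have hgeom := geom_sum_mul (-x) (K + 1)
  have hev : ev (mono (fun i => (-1 : ℝ) ^ i) (Finset.range (K + 1))) n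
      = ∑ i ∈ range (K + 1), (-x) ^ i := by
    rw [ev_mono]
    exact Finset.sum_congr rfl fun i _ => (neg_pow x i).symm
  have hsum : ev (mono (fun i => (-1 : ℝ) ^ i) (Finset.range (K + 1))) n
      = (1 - (-x) ^ (K + 1)) / (1 + x) := by
    rw [hev, eq_div_iff (by linarith)]
    have : (1 : ℝ) + x = -((-x) - 1) := by ring
    rw [this, mul_neg, hgeom]
    ring
  have hW : W n = 1 / (1 + x) := by
    rw [W, W_eq n hn, one_div]
  rw [hW, hsum]
  have hdiff : 1 / (1 + x) - (1 - (-x) ^ (K + 1)) / (1 + x) = (-x) ^ (K + 1) / (1 + x) := by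
    field_simp
    ring
  rw [hdiff]
  have herr : ‖err 0 K n‖ = x ^ (K + 1) := by
    rw [err, Real.norm_eq_abs, pow_zero, one_mul, abs_of_nonneg (by positivity)]
  rw [herr, one_mul, Real.norm_eq_abs, abs_div, abs_of_pos h1x, abs_pow, abs_neg,
    abs_of_nonneg hx0]
  rw [div_le_iff₀ h1x]
  nlinarith [pow_nonneg hx0 (K + 1)]

lemma AE_W (K : ℕ) : AE W (mono (fun i => (-1 : ℝ) ^ i) (Finset.range (K + 1))) 0 K 0 0 where
  bigO := AE_W_bigO K
  degJ := fun i => by rw [coeff_mono]; split <;> simp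
  val := fun i hi => absurd hi (Nat.not_lt_zero i)
  wt := fun i j hij => absurd hij (Nat.not_lt_zero _)

lemma AE_W' (K : ℕ) :
    AE (fun n => W n - 1) (mono (fun i => (-1 : ℝ) ^ i) (Finset.Icc 1 K)) 0 K 1 1 where
  bigO := by
    have hsplit : ∀ n, ev (mono (fun i => (-1 : ℝ) ^ i) (Finset.range (K + 1))) n
        = 1 + ev (mono (fun i => (-1 : ℝ) ^ i) (Finset.Icc 1 K)) n := by
      intro n
      rw [ev_mono, ev_mono, Finset.range_eq_Ico,
        Finset.sum_eq_sum_Ico_succ_bot (by omega : 0 < K + 1), ← Finset.Ico_add_one_right_eq_Icc]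
      norm_num
    exact (AE_W_bigO K).congr (fun n => by rw [hsplit]; ring) (fun n => rfl)
  degJ := fun i => by rw [coeff_mono]; split <;> simp
  val := fun i hi => by
    rw [coeff_mono]
    have : i ∉ Finset.Icc 1 K := by simp; omega
    simp [this]
  wt := fun i j hij => by
    have hi : i = 0 := by omega
    subst hi
    rw [coeff_mono]
    have : (0 : ℕ) ∉ Finset.Icc 1 K := by simp
    simp [this]

lemma AE_S (K : ℕ) :
    AE S (Polynomial.C Polynomial.X + mono (fun i => (-1 : ℝ) ^ (i + 1) / i) (Finset.Icc 1 K))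
      1 K 0 1 :=
  ((AE_L K).add ((AE_D K).weaken (by omega) (by omega) (by omega))).congr
    (fun n => by rw [L, D, S]; ring)


lemma AE_main (m l K : ℕ) :
    ∃ q, AE (fun n => S n ^ m * W n ^ l - L n ^ m) q m K 1 m := by
  set qL : Polynomial (Polynomial ℝ) := Polynomial.C Polynomial.X with hqL
  set qD := mono (fun i => (-1 : ℝ) ^ (i + 1) / i) (Finset.Icc 1 K) with hqD
  set qW := mono (fun i => (-1 : ℝ) ^ i) (Finset.range (K + 1)) with hqW
  set qW' := mono (fun i => (-1 : ℝ) ^ i) (Finset.Icc 1 K) with hqW'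
  have hT : AE (fun n => ∑ j ∈ range m, S n ^ j * L n ^ (m - 1 - j))
      (∑ j ∈ range m, (qL + qD) ^ j * qL ^ (m - 1 - j)) (m - 1) K 0 (m - 1) := by
    apply AE.finsum
    intro j hj
    have hjm := Finset.mem_range.mp hj
    exact (((AE_S K).pow j).mul ((AE_L K).pow (m - 1 - j))).of_eq
      (by omega) (by omega) (by omega)
  have hD := AE_D K
  have hWl : AE (fun n => W n ^ l) (qW ^ l) 0 K 0 0 :=
    ((AE_W K).pow l).of_eq (by omega) (by omega) (by omega)
  have hTDW : AE (fun n => ((∑ j ∈ range m, S n ^ j * L n ^ (m - 1 - j)) * D n) * W n ^ l)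
      (((∑ j ∈ range m, (qL + qD) ^ j * qL ^ (m - 1 - j)) * qD) * qW ^ l) m K 1 m :=
    ((hT.mul hD).mul hWl).weaken (by omega) (by omega) (by omega)
  have hU : AE (fun n => ∑ k ∈ range l, W n ^ k) (∑ k ∈ range l, qW ^ k) 0 K 0 0 := by
    apply AE.finsum
    intro k _
    exact ((AE_W K).pow k).of_eq (by omega) (by omega) (by omega)
  have hLm : AE (fun n => L n ^ m) (qL ^ m) m K 0 m :=
    ((AE_L K).pow m).of_eq (by omega) (by omega) (by omega)
  have h2 : AE (fun n => L n ^ m * ((∑ k ∈ range l, W n ^ k) * (W n - 1)))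
      (qL ^ m * ((∑ k ∈ range l, qW ^ k) * qW')) m K 1 m :=
    (hLm.mul (hU.mul (AE_W' K))).weaken (by omega) (by omega) (by omega)
  have key : ∀ n, ((∑ j ∈ range m, S n ^ j * L n ^ (m - 1 - j)) * D n) * W n ^ l
      + L n ^ m * ((∑ k ∈ range l, W n ^ k) * (W n - 1))
      = S n ^ m * W n ^ l - L n ^ m := by
    intro n
    have e1 := geom_sum₂_mul (S n) (L n) m
    have e2 := geom_sum_mul (W n) l
    have hDSL : D n = S n - L n := rfl
    rw [hDSL, e1, e2]
    ring
  exact ⟨_, (hTDW.add h2).congr key⟩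

end LogShift
end

open LogShift in
/-- For integers `p > ℓ ≥ 0` and `m ≥ 0`, there are constants `c i j` such that
`(log(n+1))^m/(n+1)^ℓ = (log n)^m/n^ℓ + ∑_{i=1}^{p−ℓ} ∑_{j=max(m−i,0)}^{m} c i j (log n)^j/n^{ℓ+i}
+ O((log n)^m / n^{p+1})` as `n → ∞`. -/
theorem log_power_shift_expansion (p ℓ m : ℕ) (hp : ℓ < p) :
    ∃ c : ℕ → ℕ → ℝ,
      (fun n : ℕ =>
          (Real.log (n + 1)) ^ m / (n + 1 : ℝ) ^ ℓ -
            ((Real.log n) ^ m / (n : ℝ) ^ ℓ +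
              ∑ i ∈ Finset.Icc 1 (p - ℓ), ∑ j ∈ Finset.Icc (m - i) m,
                c i j * (Real.log n) ^ j / (n : ℝ) ^ (ℓ + i)))
        =O[atTop] fun n : ℕ => (Real.log n) ^ m / (n : ℝ) ^ (p + 1) := by
  set K := p - ℓ with hK
  obtain ⟨q, hq⟩ := AE_main m ℓ K
  refine ⟨fun i j => (q.coeff i).coeff j, ?_⟩
  set M := max q.natDegree K with hM
  -- inner representation of the coefficient polynomials
  have hinner : ∀ i n, ∑ j ∈ Finset.Icc (m - i) m, (q.coeff i).coeff j * L n ^ j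
      = (q.coeff i).eval (L n) := by
    intro i n
    rw [Polynomial.eval_eq_sum_range' (lt_of_le_of_lt (hq.degJ i) (lt_add_one m))]
    apply Finset.sum_subset
    · intro j hj
      rw [Finset.mem_range]
      rw [Finset.mem_Icc] at hj
      omega
    · intro j hjr hjn
      rw [Finset.mem_range] at hjr
      rw [Finset.mem_Icc] at hjn
      have hj : i + j < m := by omega
      rw [hq.wt i j hj, zero_mul]
  -- split of ev into head and tail
  have hsplit : ∀ n, ev q n
      = (∑ i ∈ Finset.Icc 1 K, (q.coeff i).eval (L n) * u n ^ i)
        + ∑ i ∈ Finset.Ico (K + 1) (M + 1), (q.coeff i).eval (L n) * u n ^ i := by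
    intro n
    rw [ev_sum_repr q (le_max_left _ _) n]
    rw [Finset.range_eq_Ico,
      ← Finset.sum_Ico_consecutive _ (Nat.zero_le (K + 1)) (by omega : K + 1 ≤ M + 1)]
    congr 1
    rw [← Finset.range_eq_Ico]
    symm
    apply Finset.sum_subset
    · intro x hx
      rw [Finset.mem_range]
      rw [Finset.mem_Icc] at hx
      omega
    · intro x hxr hxn
      rw [Finset.mem_range] at hxr
      rw [Finset.mem_Icc] at hxn
      have hx0 : x = 0 := by omega
      subst hx0
      rw [hq.val 0 (by omega), Polynomial.eval_zero, zero_mul]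
  have htail : (fun n => ∑ i ∈ Finset.Ico (K + 1) (M + 1), (q.coeff i).eval (L n) * u n ^ i)
      =O[atTop] err m K := by
    apply IsBigO.fun_sum
    intro i hi
    have hik : K + 1 ≤ i := (Finset.mem_Ico.mp hi).1
    exact (polyeval_bigO _ (hq.degJ i)).mul (bigO_u hik)
  have hhb : (fun n => (S n ^ m * W n ^ ℓ - L n ^ m)
      - ∑ i ∈ Finset.Icc 1 K, (q.coeff i).eval (L n) * u n ^ i) =O[atTop] err m K :=
    (hq.bigO.add htail).congr (fun n => by rw [hsplit n]; ring) (fun n => rfl)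
  -- identify the goal function with u^ℓ * (f - head), eventually
  have EQ : ∀ᶠ n : ℕ in atTop,
      (Real.log ((n : ℝ) + 1)) ^ m / ((n : ℝ) + 1) ^ ℓ -
        ((Real.log (n : ℝ)) ^ m / (n : ℝ) ^ ℓ +
          ∑ i ∈ Finset.Icc 1 K, ∑ j ∈ Finset.Icc (m - i) m,
            (q.coeff i).coeff j * (Real.log (n : ℝ)) ^ j / (n : ℝ) ^ (ℓ + i))
      = u n ^ ℓ * ((S n ^ m * W n ^ ℓ - L n ^ m)
          - ∑ i ∈ Finset.Icc 1 K, (q.coeff i).eval (L n) * u n ^ i) := by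
    filter_upwards [eventually_ge_atTop 1] with n hn
    have hn0 : (0 : ℝ) < (n : ℝ) := by exact_mod_cast hn
    have hn1 : (0 : ℝ) < (n : ℝ) + 1 := by linarith
    have p1 : Real.log ((n : ℝ) + 1) ^ m / ((n : ℝ) + 1) ^ ℓ
        = u n ^ ℓ * (S n ^ m * W n ^ ℓ) := by
      rw [S, W, u, div_pow, inv_pow, eq_comm]
      field_simp
    have p2 : Real.log (n : ℝ) ^ m / (n : ℝ) ^ ℓ = u n ^ ℓ * L n ^ m := by
      rw [L, u, inv_pow, div_eq_mul_inv]; ring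
    have p3 : (∑ i ∈ Finset.Icc 1 K, ∑ j ∈ Finset.Icc (m - i) m,
          (q.coeff i).coeff j * (Real.log (n : ℝ)) ^ j / (n : ℝ) ^ (ℓ + i))
        = u n ^ ℓ * ∑ i ∈ Finset.Icc 1 K, (q.coeff i).eval (L n) * u n ^ i := by
      rw [Finset.mul_sum]
      apply Finset.sum_congr rfl
      intro i _
      rw [← hinner i n, Finset.sum_mul, Finset.mul_sum]
      apply Finset.sum_congr rfl
      intro j _
      simp only [u, L, div_eq_mul_inv, ← inv_pow, pow_add]
      ring
    rw [p1, p2, p3]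
    ring
  have final := (isBigO_refl (fun n => u n ^ ℓ) atTop).mul hhb
  have rhs_eq : (fun n : ℕ => u n ^ ℓ * err m K n)
      = fun n : ℕ => (Real.log (n : ℝ)) ^ m / (n : ℝ) ^ (p + 1) := by
    funext n
    rw [err, L, u, div_eq_mul_inv, ← inv_pow,
      show p + 1 = ℓ + (K + 1) by omega, pow_add]
    ring
  rw [rhs_eq] at final
  exact Filter.EventuallyEq.trans_isBigO EQ final
end

section
/- Singularity rigidity for periodic nonnegative generating functions: let Q(t) = ∑ q_n t^n be a power series with nonnegative real coefficients and finite positive radius of convergence r, and suppose there exist a 'renewal loop': an index ℓ ≥ 1 with q-structure as follows — there exists w > 0 such that Q_j(t) := the subseries of coefficients with indices ≡ j mod ℓ can be written as Q_j(t) = (1/(1 − w t^ℓ)) · F_j(t^ℓ/(1 − w t^ℓ)) for power series F_j with nonnegative coefficients (j = 0,…,ℓ−1). Then Q has no singularities t₀ with |t₀| = r other than the points r·e^{2πij/ℓ}, j = 0,…,ℓ−1. -/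
open Real
open scoped NNReal ENNReal

lemma analyticAt_tsum_cpow {a : ℕ → ℂ} {u : ℝ}
    (hsum : Summable fun n => ‖a n‖ * u ^ n) {z : ℂ} (hz : ‖z‖ < u) :
    AnalyticAt ℂ (fun z => ∑' n, a n * z ^ n) z := by
  have hu0 : 0 < u := lt_of_le_of_lt (norm_nonneg z) hz
  set p := FormalMultilinearSeries.ofScalars ℂ a with hp
  have hrad : (u.toNNReal : ℝ≥0∞) ≤ p.radius := by
    apply p.le_radius_of_summable
    have he : (fun n => ‖p n‖ * ((u.toNNReal : ℝ≥0) : ℝ) ^ n) = fun n => ‖a n‖ * u ^ n := by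
      funext n
      rw [hp, FormalMultilinearSeries.ofScalars_norm, Real.coe_toNNReal u hu0.le]
    rw [he]; exact hsum
  have hpos : 0 < p.radius := lt_of_lt_of_le (by simpa using hu0) hrad
  have hsumeq : p.sum = fun z => ∑' n, a n * z ^ n := by
    funext y
    exact tsum_congr fun n => by
      rw [FormalMultilinearSeries.ofScalars_apply_eq, smul_eq_mul]
  have hmem : z ∈ Metric.eball (0:ℂ) p.radius := by
    rw [Metric.mem_eball, edist_zero_right]
    calc (‖z‖₊ : ℝ≥0∞) < u.toNNReal := by
          rw [ENNReal.coe_lt_coe, ← NNReal.coe_lt_coe, coe_nnnorm,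
            Real.coe_toNNReal u hu0.le]
          exact hz
      _ ≤ p.radius := hrad
  have := (p.hasFPowerSeriesOnBall hpos).analyticAt_of_mem hmem
  rwa [hsumeq] at this

set_option maxHeartbeats 1000000 in
/-- Singularity rigidity for periodic nonnegative generating functions with a renewal loop:
if `Q(t) = ∑ q_n tⁿ` has nonnegative coefficients and radius of convergence `r`, and each
congruence-class subseries `Q_j(t) = ∑_n q_{nℓ+j} tⁿ` can be written as
`(1/(1−wt))·F_j(t/(1−wt))` with `F_j` having nonnegative coefficients, then `Q` extends
analytically to every point of the circle `|t| = r` other than `r·e^{2πij/ℓ}`. -/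
theorem renewal_loop_singularities (q : ℕ → ℝ) (hq : ∀ n, 0 ≤ q n) (r : ℝ) (hr : 0 < r)
    (hconv : ∀ x : ℝ, 0 ≤ x → x < r → Summable fun n => q n * x ^ n)
    (hdiv : ∀ x : ℝ, r < x → ¬ Summable fun n => q n * x ^ n)
    (ℓ : ℕ) (hℓ : 1 ≤ ℓ) (w : ℝ) (hw : 0 < w)
    (hrenew : ∀ j < ℓ, ∃ F : ℕ → ℝ, (∀ n, 0 ≤ F n) ∧
      ∀ t : ℝ, 0 ≤ t → t < r ^ ℓ → w * t < 1 ∧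
        ∑' n : ℕ, q (n * ℓ + j) * t ^ n
          = (1 - w * t)⁻¹ * ∑' n : ℕ, F n * (t / (1 - w * t)) ^ n) :
    ∀ t₀ : ℂ, ‖t₀‖ = r →
      (∀ j < ℓ, t₀ ≠ (r : ℂ) * Complex.exp (2 * (π : ℂ) * Complex.I * j / ℓ)) →
      ∃ g : ℂ → ℂ, AnalyticAt ℂ g t₀ ∧
        ∀ z : ℂ, ‖z‖ < r → g z = ∑' n : ℕ, (q n : ℂ) * z ^ n := by
  intro t₀ ht₀ hroot
  have hℓ0 : ℓ ≠ 0 := by omega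
  haveI : NeZero ℓ := ⟨hℓ0⟩
  set R := r ^ ℓ with hRdef
  have hR : 0 < R := pow_pos hr ℓ
  -- Step 1 : w * R ≤ 1
  have hw1 : w * R ≤ 1 := by
    by_contra h
    push_neg at h
    obtain ⟨F0, -, hid⟩ := hrenew 0 (by omega)
    have h2 : w⁻¹ < R := by
      rw [inv_eq_one_div, div_lt_iff₀ hw]
      nlinarith
    have h3 := (hid w⁻¹ (by positivity) h2).1
    rw [mul_inv_cancel₀ hw.ne'] at h3
    exact lt_irrefl 1 h3
  -- injectivity of n ↦ n*ℓ+j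
  have hinj : ∀ j : ℕ, Function.Injective (fun n : ℕ => n * ℓ + j) := by
    intro j m n hmn
    simp only at hmn
    have := Nat.add_right_cancel hmn
    exact Nat.eq_of_mul_eq_mul_right (by omega) this
  -- Step 2 : real subseries summability
  have hsubR : ∀ j < ℓ, ∀ x : ℝ, 0 ≤ x → x < R →
      Summable fun n => q (n * ℓ + j) * x ^ n := by
    intro j hj x hx0 hxR
    rcases eq_or_lt_of_le hx0 with h0 | h0
    · apply summable_of_ne_finset_zero (s := {0})
      intro n hn
      simp only [Finset.mem_singleton] at hn
      rw [← h0, zero_pow hn, mul_zero]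
    · set y := x ^ (ℓ : ℝ)⁻¹ with hy
      have hy0 : 0 < y := Real.rpow_pos_of_pos h0 _
      have hyx : y ^ ℓ = x := Real.rpow_inv_natCast_pow hx0 hℓ0
      have hyr : y < r := by
        have h1 : y ^ ℓ < r ^ ℓ := by rw [hyx]; exact hxR
        exact lt_of_pow_lt_pow_left₀ ℓ hr.le h1
      have hs := (hconv y hy0.le hyr).comp_injective (hinj j)
      have hs2 := hs.mul_right ((y ^ j)⁻¹)
      apply hs2.congr
      intro n
      simp only [Function.comp]
      rw [pow_add, pow_mul', hyx]
      field_simp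
  -- Step 3 : refined renewal
  have hFex : ∀ j : Fin ℓ, ∃ F : ℕ → ℝ, (∀ n, 0 ≤ F n) ∧
      (∀ u : ℝ, 0 ≤ u → u * (1 - w * R) < R → Summable fun n => F n * u ^ n) ∧
      (∀ t : ℝ, 0 ≤ t → t < R →
        (∑' n, q (n * ℓ + (j : ℕ)) * t ^ n)
          = (1 - w * t)⁻¹ * ∑' n, F n * (t / (1 - w * t)) ^ n) := by
    intro j
    obtain ⟨F, hFpos, hid⟩ := hrenew j j.2
    by_cases hz : ∀ n, q (n * ℓ + (j : ℕ)) = 0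
    · refine ⟨fun _ => 0, fun n => le_refl 0, ?_, ?_⟩
      · intro u _ _; simpa using summable_zero
      · intro t ht0 htR; simp [hz]
    · push_neg at hz
      obtain ⟨n0, hn0⟩ := hz
      refine ⟨F, hFpos, ?_, fun t ht0 htR => (hid t ht0 htR).2⟩
      intro u hu0 huR
      rcases eq_or_lt_of_le hu0 with h0 | h0
      · apply summable_of_ne_finset_zero (s := {0})
        intro n hn
        simp only [Finset.mem_singleton] at hn
        rw [← h0, zero_pow hn, mul_zero]
      · set t := u / (1 + w * u) with htdef
        have h1wu : 0 < 1 + w * u := by positivity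
        have ht0 : 0 < t := div_pos h0 h1wu
        have htR : t < R := by
          rw [htdef, div_lt_iff₀ h1wu]
          nlinarith
        have hwt : 1 - w * t = (1 + w * u)⁻¹ := by
          rw [htdef]
          field_simp
          ring
        have hut : t / (1 - w * t) = u := by
          rw [hwt, htdef]
          field_simp
        have hid' := (hid t ht0.le htR).2
        by_contra hns
        rw [hut, tsum_eq_zero_of_not_summable hns, mul_zero] at hid'
        have hsum := hsubR j j.2 t ht0.le htR
        have hterm : 0 < q (n0 * ℓ + (j : ℕ)) * t ^ n0 :=
          mul_pos (lt_of_le_of_ne (hq _) (Ne.symm hn0)) (pow_pos ht0 n0)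
        have hpos : 0 < ∑' n, q (n * ℓ + (j : ℕ)) * t ^ n :=
          lt_of_lt_of_le hterm
            (Summable.le_tsum hsum n0 (fun i _ => mul_nonneg (hq _) (pow_nonneg ht0.le i)))
        rw [hid'] at hpos
        exact lt_irrefl 0 hpos
  choose F hFpos hFsum hFid using hFex
  set G : Fin ℓ → ℂ → ℂ := fun j z =>
    (1 - (w : ℂ) * z)⁻¹ * ∑' n, ((F j n : ℂ)) * (z / (1 - (w : ℂ) * z)) ^ n with hGdef
  set A : Fin ℓ → ℂ → ℂ := fun j z => ∑' n, ((q (n * ℓ + (j : ℕ)) : ℂ)) * z ^ n with hAdef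
  -- analyticity of G j
  have hGan : ∀ j : Fin ℓ, ∀ z : ℂ, 1 - (w : ℂ) * z ≠ 0 →
      ‖z / (1 - (w : ℂ) * z)‖ * (1 - w * R) < R → AnalyticAt ℂ (G j) z := by
    intro j z hne hsm
    set u0 := ‖z / (1 - (w : ℂ) * z)‖ with hu0def
    have hu00 : 0 ≤ u0 := norm_nonneg _
    obtain ⟨u, hu1, hu2⟩ : ∃ u : ℝ, u0 < u ∧ u * (1 - w * R) < R := by
      rcases le_or_gt (1 - w * R) 0 with h | h
      · exact ⟨u0 + 1, by linarith, by nlinarith⟩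
      · have hub : u0 < R / (1 - w * R) := (lt_div_iff₀ h).2 hsm
        have hcan : (R / (1 - w * R)) * (1 - w * R) = R := div_mul_cancel₀ _ h.ne'
        refine ⟨(u0 + R / (1 - w * R)) / 2, by linarith, by nlinarith⟩
    have hsumC : Summable fun n => ‖((F j n : ℝ) : ℂ)‖ * u ^ n := by
      apply (hFsum j u (le_trans hu00 hu1.le) hu2).congr
      intro n
      rw [Complex.norm_real, Real.norm_eq_abs, abs_of_nonneg (hFpos j n)]
    have hH : AnalyticAt ℂ (fun v => ∑' n, ((F j n : ℝ) : ℂ) * v ^ n)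
        (z / (1 - (w : ℂ) * z)) := analyticAt_tsum_cpow hsumC hu1
    have hden : AnalyticAt ℂ (fun v : ℂ => 1 - (w : ℂ) * v) z :=
      analyticAt_const.sub (analyticAt_const.mul analyticAt_id)
    have hφ : AnalyticAt ℂ (fun v : ℂ => v / (1 - (w : ℂ) * v)) z :=
      analyticAt_id.div hden hne
    have hcomp := AnalyticAt.comp (f := fun v : ℂ => v / (1 - (w : ℂ) * v)) (x := z) hH hφ
    exact ((hden.inv hne).mul hcomp)
  -- ball facts
  have hball : ∀ z : ℂ, ‖z‖ < R →
      1 - (w : ℂ) * z ≠ 0 ∧ ‖z / (1 - (w : ℂ) * z)‖ * (1 - w * R) < R := by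
    intro z hzR
    have ha0 : 0 ≤ ‖z‖ := norm_nonneg z
    have hpos1 : 0 < 1 - w * ‖z‖ := by nlinarith
    have hlow : 1 - w * ‖z‖ ≤ ‖1 - (w : ℂ) * z‖ := by
      have h1 := norm_sub_norm_le (1 : ℂ) ((w : ℂ) * z)
      rw [norm_one, norm_mul, Complex.norm_real, Real.norm_eq_abs, abs_of_pos hw] at h1
      exact h1
    have hne : 1 - (w : ℂ) * z ≠ 0 := by
      intro h
      rw [h, norm_zero] at hlow
      linarith
    refine ⟨hne, ?_⟩
    rw [norm_div, div_mul_eq_mul_div, div_lt_iff₀ (lt_of_lt_of_le hpos1 hlow)]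
    calc ‖z‖ * (1 - w * R) < R * (1 - w * ‖z‖) := by nlinarith
      _ ≤ R * ‖1 - (w : ℂ) * z‖ := by nlinarith
  -- A analytic on ball
  have hAan : ∀ j : Fin ℓ, ∀ z : ℂ, ‖z‖ < R → AnalyticAt ℂ (A j) z := by
    intro j z hz
    have ha0 : 0 ≤ ‖z‖ := norm_nonneg z
    have hmid : Summable fun n =>
        ‖((q (n * ℓ + (j : ℕ)) : ℝ) : ℂ)‖ * ((‖z‖ + R) / 2) ^ n := by
      apply (hsubR j j.2 ((‖z‖ + R) / 2) (by linarith) (by linarith)).congr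
      intro n
      rw [Complex.norm_real, Real.norm_eq_abs, abs_of_nonneg (hq _)]
    exact analyticAt_tsum_cpow hmid (by linarith)
  -- real identity pushed to ℂ
  have hreal : ∀ j : Fin ℓ, ∀ x : ℝ, 0 < x → x < R → A j ((x : ℝ) : ℂ) = G j x := by
    intro j x hx0 hxR
    have hQsum := hsubR j j.2 x hx0.le hxR
    have hwx : 0 < 1 - w * x := by nlinarith
    have hu : 0 ≤ x / (1 - w * x) := by positivity
    have huR : (x / (1 - w * x)) * (1 - w * R) < R := by
      rw [div_mul_eq_mul_div, div_lt_iff₀ hwx]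
      nlinarith
    have hFs := hFsum j _ hu huR
    have hid := hFid j x hx0.le hxR
    have h1 : A j ((x : ℝ) : ℂ) = ((∑' n, q (n * ℓ + (j : ℕ)) * x ^ n : ℝ) : ℂ) := by
      rw [hAdef, Complex.ofReal_tsum]
      exact tsum_congr fun n => by push_cast; ring
    have h2 : G j ((x : ℝ) : ℂ)
        = (((1 - w * x)⁻¹ * ∑' n, F j n * (x / (1 - w * x)) ^ n : ℝ) : ℂ) := by
      rw [hGdef]
      simp only
      rw [Complex.ofReal_mul, Complex.ofReal_inv, Complex.ofReal_tsum]
      push_cast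
      ring_nf
    rw [h1, h2, hid]
  -- identity theorem
  have hAG : ∀ j : Fin ℓ, ∀ z : ℂ, ‖z‖ < R → A j z = G j z := by
    intro j z hz
    have hfreq : ∃ᶠ v in nhdsWithin (0 : ℂ) {(0 : ℂ)}ᶜ, A j v = G j v := by
      have hden : Filter.Tendsto (fun k : ℕ => ((k : ℝ) + 2)) Filter.atTop Filter.atTop :=
        Filter.tendsto_atTop_add_const_right _ 2 tendsto_natCast_atTop_atTop
      have h0 : Filter.Tendsto (fun k : ℕ => R / ((k : ℝ) + 2)) Filter.atTop (nhds 0) :=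
        Filter.Tendsto.div_atTop tendsto_const_nhds hden
      have h0c : Filter.Tendsto (fun k : ℕ => ((R / ((k : ℝ) + 2) : ℝ) : ℂ))
          Filter.atTop (nhds (((0 : ℝ) : ℂ))) :=
        (Complex.continuous_ofReal.tendsto 0).comp h0
      rw [Complex.ofReal_zero] at h0c
      have hpt : ∀ k : ℕ, 0 < R / ((k : ℝ) + 2) := by
        intro k; positivity
      have htw : Filter.Tendsto (fun k : ℕ => ((R / ((k : ℝ) + 2) : ℝ) : ℂ))
          Filter.atTop (nhdsWithin 0 {(0 : ℂ)}ᶜ) := by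
        apply tendsto_nhdsWithin_of_tendsto_nhds_of_eventually_within _ h0c
        apply Filter.Eventually.of_forall
        intro k
        simp only [Set.mem_compl_iff, Set.mem_singleton_iff]
        exact_mod_cast (hpt k).ne'
      apply htw.frequently
      apply Filter.Frequently.of_forall
      intro k
      have hlt : R / ((k : ℝ) + 2) < R := by
        rw [div_lt_iff₀ (by positivity : (0:ℝ) < (k : ℝ) + 2)]
        nlinarith
      exact hreal j _ (hpt k) hlt
    have hAan' : AnalyticOnNhd ℂ (A j) (Metric.ball (0 : ℂ) R) := by
      intro v hv
      rw [Metric.mem_ball, dist_zero_right] at hv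
      exact hAan j v hv
    have hGan' : AnalyticOnNhd ℂ (G j) (Metric.ball (0 : ℂ) R) := by
      intro v hv
      rw [Metric.mem_ball, dist_zero_right] at hv
      exact hGan j v (hball v hv).1 (hball v hv).2
    have := hAan'.eqOn_of_preconnected_of_frequently_eq hGan'
      (convex_ball (0 : ℂ) R).isPreconnected (Metric.mem_ball_self hR) hfreq
    exact this (by rw [Metric.mem_ball, dist_zero_right]; exact hz)
  -- conditions at ζ = t₀^ℓ
  set ζ := t₀ ^ ℓ with hζdef
  have hζabs : ‖ζ‖ = R := by rw [hζdef, norm_pow, ht₀]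
  have hζne : ζ ≠ (R : ℂ) := by
    intro h
    have hr0 : (r : ℂ) ≠ 0 := by
      simp only [ne_eq, Complex.ofReal_eq_zero]
      exact hr.ne'
    have hpow1 : (t₀ / r) ^ ℓ = 1 := by
      rw [div_pow, hζdef] at *
      rw [h, hRdef]
      push_cast
      field_simp
    obtain ⟨i, hi, hie⟩ :=
      (Complex.isPrimitiveRoot_exp ℓ hℓ0).eq_pow_of_pow_eq_one hpow1
    apply hroot i hi
    have ht : t₀ = (r : ℂ) * Complex.exp (2 * (π : ℂ) * Complex.I / ℓ) ^ i := by
      rw [hie]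
      field_simp
    rw [ht, ← Complex.exp_nat_mul]
    congr 2
    ring
  have hRe : ζ.re < R := by
    rcases lt_or_eq_of_le (Complex.re_le_norm ζ) with h | h
    · rwa [hζabs] at h
    · exfalso
      apply hζne
      have hsq := Complex.sq_norm ζ
      rw [Complex.normSq_apply] at hsq
      have him : ζ.im = 0 := by nlinarith [sq_nonneg ζ.im, sq_nonneg ζ.re]
      have : ζ = ((ζ.re : ℝ) : ℂ) := Complex.ext rfl (by simp [him])
      rw [this, h, hζabs]
  have hsq2 : ζ.re ^ 2 + ζ.im ^ 2 = R ^ 2 := by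
    have hsq := Complex.sq_norm ζ
    rw [Complex.normSq_apply, hζabs] at hsq
    nlinarith [hsq]
  have hkey : 1 - w * R < ‖1 - (w : ℂ) * ζ‖ := by
    have h2 : (‖1 - (w : ℂ) * ζ‖) ^ 2 = (1 - w * R) ^ 2 + 2 * w * (R - ζ.re) := by
      rw [Complex.sq_norm, Complex.normSq_apply]
      simp only [Complex.sub_re, Complex.one_re, Complex.mul_re, Complex.ofReal_re,
        Complex.ofReal_im, Complex.sub_im, Complex.one_im, Complex.mul_im]
      linear_combination (w ^ 2) * hsq2
    have hpos2 : (1 - w * R) ^ 2 < (‖1 - (w : ℂ) * ζ‖) ^ 2 := by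
      rw [h2]; nlinarith
    exact lt_of_pow_lt_pow_left₀ 2 (norm_nonneg _) hpos2
  have hwR0 : 0 ≤ 1 - w * R := by linarith
  have hD : 0 < ‖1 - (w : ℂ) * ζ‖ := lt_of_le_of_lt hwR0 hkey
  have hζ1 : 1 - (w : ℂ) * ζ ≠ 0 := by
    intro h
    rw [h, norm_zero] at hD
    exact lt_irrefl 0 hD
  have hζ2 : ‖ζ / (1 - (w : ℂ) * ζ)‖ * (1 - w * R) < R := by
    rw [norm_div, hζabs, div_mul_eq_mul_div, div_lt_iff₀ hD]
    exact mul_lt_mul_of_pos_left hkey hR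
  -- the extension
  refine ⟨fun z => ∑ j : Fin ℓ, z ^ (j : ℕ) * G j (z ^ ℓ), ?_, ?_⟩
  · apply Finset.analyticAt_fun_sum
    intro j _
    exact (analyticAt_id.pow _).mul ((hGan j ζ hζ1 hζ2).comp (analyticAt_id.pow ℓ))
  · intro z hz
    have ha0 : 0 ≤ ‖z‖ := norm_nonneg z
    have hzℓ : ‖z ^ ℓ‖ < R := by
      rw [norm_pow]
      exact pow_lt_pow_left₀ hz ha0 hℓ0
    have hsum : Summable fun n => (q n : ℂ) * z ^ n := by
      apply Summable.of_norm
      apply (hconv (‖z‖) ha0 hz).congr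
      intro n
      rw [norm_mul, norm_pow, Complex.norm_real, Real.norm_eq_abs,
        abs_of_nonneg (hq n)]
    have hrow : ∀ j : Fin ℓ, Summable fun n =>
        (q (n * ℓ + (j : ℕ)) : ℂ) * z ^ (n * ℓ + (j : ℕ)) := by
      intro j
      apply Summable.of_norm
      apply ((hconv (‖z‖) ha0 hz).comp_injective (hinj j)).congr
      intro n
      simp only [Function.comp]
      rw [norm_mul, norm_pow, Complex.norm_real, Real.norm_eq_abs,
        abs_of_nonneg (hq _)]
    set e : Fin ℓ × ℕ ≃ ℕ := (Equiv.prodComm _ _).trans (Nat.divModEquiv ℓ).symm with hedef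
    have he : ∀ p : Fin ℓ × ℕ, e p = p.2 * ℓ + (p.1 : ℕ) := fun p => rfl
    have hsump : Summable fun p : Fin ℓ × ℕ =>
        (q (p.2 * ℓ + (p.1 : ℕ)) : ℂ) * z ^ (p.2 * ℓ + (p.1 : ℕ)) := by
      have := (e.summable_iff (f := fun n => (q n : ℂ) * z ^ n)).2 hsum
      apply this.congr
      intro p
      simp [Function.comp, he]
    have hre : ∑' n, (q n : ℂ) * z ^ n
        = ∑' p : Fin ℓ × ℕ, (q (p.2 * ℓ + (p.1 : ℕ)) : ℂ) * z ^ (p.2 * ℓ + (p.1 : ℕ)) := by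
      refine Eq.trans (e.tsum_eq (fun n => (q n : ℂ) * z ^ n)).symm ?_
      exact tsum_congr fun p => by rw [he p]
    rw [hre]
    rw [Summable.tsum_prod' hsump (fun j => hrow j)]
    rw [tsum_fintype]
    apply Finset.sum_congr rfl
    intro j _
    have hterm : ∀ n : ℕ, (q (n * ℓ + (j : ℕ)) : ℂ) * z ^ (n * ℓ + (j : ℕ))
        = z ^ (j : ℕ) * ((q (n * ℓ + (j : ℕ)) : ℂ) * (z ^ ℓ) ^ n) := by
      intro n
      rw [pow_add, pow_mul]
      ring
    rw [tsum_congr hterm, tsum_mul_left]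
    rw [show (∑' n, (q (n * ℓ + (j : ℕ)) : ℂ) * (z ^ ℓ) ^ n) = A j (z ^ ℓ) from rfl]
    rw [hAG j (z ^ ℓ) hzℓ]
end

section
/- If F is a power series with nonnegative real coefficients and radius of convergence t_F ∈ (0, ∞), and w > 0, and G(t) := (1/(1 − w t)) F(t/(1 − w t)) has a singularity t₀ with |t₀| = t_Q := t_F/(1 + w t_F), then t₀ = t_Q. (That is, after the substitution t ↦ t/(1 − wt), the unique singularity of G on its circle of convergence is the positive real point.) -/
open FormalMultilinearSeries in
theorem aux_analytic (F : ℕ → ℝ) (hF : ∀ n, 0 ≤ F n) (tF : ℝ) (htF : 0 < tF)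
    (hconv : ∀ x : ℝ, 0 ≤ x → x < tF → Summable fun n => F n * x ^ n)
    (u₀ : ℂ) (hu : ‖u₀‖ < tF) :
    AnalyticAt ℂ (ofScalarsSum (fun n => (F n : ℂ))) u₀ := by
  set c : ℕ → ℂ := fun n => (F n : ℂ)
  set p := ofScalars ℂ c with hp
  have hrad : (ENNReal.ofReal tF) ≤ p.radius := by
    refine ENNReal.le_of_forall_nnreal_lt fun r hr => ?_
    have hrlt : (r : ℝ) < tF := by
      rw [← ENNReal.ofReal_coe_nnreal] at hr
      exact (ENNReal.ofReal_lt_ofReal_iff htF).mp hr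
    refine p.le_radius_of_summable ?_
    have hs : Summable fun n => F n * (r : ℝ) ^ n := hconv r r.coe_nonneg hrlt
    refine hs.of_nonneg_of_le (fun n => by positivity) fun n => ?_
    have h1 : ‖p n‖ = ‖c n‖ := ofScalars_norm (E := ℂ) c n
    have h2 : ‖c n‖ = F n := by simp [c, abs_of_nonneg (hF n)]
    rw [h1, h2]
  have hpos : 0 < p.radius := lt_of_lt_of_le (by simpa using htF) hrad
  refine (p.hasFPowerSeriesOnBall hpos).analyticAt_of_mem ?_
  simp only [EMetric.mem_ball, edist_zero_right]
  calc (‖u₀‖₊ : ENNReal) < ENNReal.ofReal tF := by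
        rw [← ENNReal.ofReal_coe_nnreal, coe_nnnorm]
        exact (ENNReal.ofReal_lt_ofReal_iff htF).mpr hu
    _ ≤ p.radius := hrad

/-- After the substitution `t ↦ t/(1−wt)`, the only possible singularity of
`G(t) = (1/(1−wt)) F(t/(1−wt))` on its circle of convergence `|t| = t_F/(1+w t_F)`
is the positive real point `t_Q = t_F/(1+w t_F)`. -/
theorem substitution_dominant_singularity_real (F : ℕ → ℝ) (hF : ∀ n, 0 ≤ F n)
    (tF : ℝ) (htF : 0 < tF)
    (hconv : ∀ x : ℝ, 0 ≤ x → x < tF → Summable fun n => F n * x ^ n)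
    (hdiv : ∀ x : ℝ, tF < x → ¬ Summable fun n => F n * x ^ n)
    (w : ℝ) (hw : 0 < w) (t₀ : ℂ)
    (ht₀ : ‖t₀‖ = tF / (1 + w * tF))
    (hsing : ¬ ∃ g : ℂ → ℂ, AnalyticAt ℂ g t₀ ∧
      ∀ z : ℂ, 1 - (w : ℂ) * z ≠ 0 → ‖z / (1 - (w : ℂ) * z)‖ < tF →
        g z = (1 - (w : ℂ) * z)⁻¹ * ∑' n : ℕ, (F n : ℂ) * (z / (1 - (w : ℂ) * z)) ^ n) :
    t₀ = ((tF / (1 + w * tF) : ℝ) : ℂ) := by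
  by_contra hne
  set tQ : ℝ := tF / (1 + w * tF) with htQ
  have hden : (0:ℝ) < 1 + w * tF := by positivity
  have htQpos : 0 < tQ := by positivity
  have h1wQ : 1 - w * tQ = 1 / (1 + w * tF) := by rw [htQ]; field_simp; ring
  have h1wQpos : 0 < 1 - w * tQ := by rw [h1wQ]; positivity
  have htFeq : tQ / (1 - w * tQ) = tF := by rw [h1wQ, htQ]; field_simp
  -- real part strictly less than tQ
  set x := t₀.re with hx
  set y := t₀.im with hy
  have habs2 : x ^ 2 + y ^ 2 = tQ ^ 2 := by
    have := Complex.sq_norm t₀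
    rw [ht₀] at this
    rw [this]
    simp [Complex.normSq_apply, hx, hy]
    ring
  have hxlt : x < tQ := by
    rcases lt_or_eq_of_le (show x ≤ tQ by nlinarith [sq_nonneg y, sq_nonneg (x - tQ), sq_nonneg (x + tQ)]) with h | h
    · exact h
    · exfalso
      have hy0 : y = 0 := by nlinarith [sq_nonneg y]
      apply hne
      apply Complex.ext
      · simp only [Complex.ofReal_re, ← hx, h]
      · simp only [Complex.ofReal_im, ← hy, hy0]
  -- |1 - w t₀| > 1 - w tQ
  have hkey : 1 - w * tQ < ‖1 - (w : ℂ) * t₀‖ := by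
    have h2 : (‖1 - (w : ℂ) * t₀‖) ^ 2 = (1 - w * x) ^ 2 + (w * y) ^ 2 := by
      rw [← Complex.normSq_eq_norm_sq]
      simp [Complex.normSq_apply, hx, hy]
      ring
    have h3 : (1 - w * tQ) ^ 2 < ‖1 - (w : ℂ) * t₀‖ ^ 2 := by
      rw [h2]
      nlinarith [mul_pos hw (sub_pos.mpr hxlt), sq_nonneg y]
    exact lt_of_pow_lt_pow_left₀ 2 (norm_nonneg _) h3
  have hne0 : 1 - (w : ℂ) * t₀ ≠ 0 := by
    intro h
    rw [h] at hkey
    simp at hkey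
    linarith
  have himg : ‖t₀ / (1 - (w : ℂ) * t₀)‖ < tF := by
    rw [norm_div, ht₀]
    rw [div_lt_iff₀ (norm_pos_iff.mpr hne0)]
    calc tQ = tF * (1 - w * tQ) := by rw [← htFeq]; field_simp; rw [div_self (by linarith)]
      _ < tF * ‖1 - (w : ℂ) * t₀‖ := by
          exact mul_lt_mul_of_pos_left hkey htF
  -- build analytic extension
  apply hsing
  set c : ℕ → ℂ := fun n => (F n : ℂ)
  refine ⟨fun z => (1 - (w : ℂ) * z)⁻¹ *
      FormalMultilinearSeries.ofScalarsSum c (z / (1 - (w : ℂ) * z)), ?_, ?_⟩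
  · have hinv : AnalyticAt ℂ (fun z => (1 - (w : ℂ) * z)⁻¹) t₀ :=
      (analyticAt_const.sub (analyticAt_const.mul analyticAt_id)).inv hne0
    have hm : AnalyticAt ℂ (fun z => z / (1 - (w : ℂ) * z)) t₀ :=
      analyticAt_id.div (analyticAt_const.sub (analyticAt_const.mul analyticAt_id)) hne0
    have hH : AnalyticAt ℂ (FormalMultilinearSeries.ofScalarsSum c)
        (t₀ / (1 - (w : ℂ) * t₀)) := aux_analytic F hF tF htF hconv _ himg
    exact hinv.mul (AnalyticAt.comp (f := fun z => z / (1 - (w:ℂ) * z)) (x := t₀) hH hm)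
  · intro z hz1 hz2
    simp only [FormalMultilinearSeries.ofScalars_sum_eq, smul_eq_mul, c]
end
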